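/- (Distortion Lemma) Let J₀, J₁, …, J_N be intervals in ℝ and ψ_i : J_i → J_{i+1} (i = 0, …, N−1) orientation-preserving C² diffeomorphisms (ψ_i' > 0). For a diffeomorphism ψ of an interval A define its distortion rate κ(ψ) = ln( max_A ψ' / min_A ψ' ). Then the composition F_{N−1} = ψ_{N−1} ∘ … ∘ ψ₀ satisfies κ(F_{N−1}) ≤ ( max_i max_{x∈J_i} |ψ_i''(x)/ψ_i'(x)| ) · Σ_{k=0}^{N−1} |J_k|. -/

import Mathlib

noncomputable section

open Real Set

/-- Iterated composition `G i = ψ_{i-1} ∘ ⋯ ∘ ψ₀`, with `G 0 = id`. -/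
def distortionG (ψ : ℕ → ℝ → ℝ) : ℕ → ℝ → ℝ
  | 0 => id
  | (i + 1) => ψ i ∘ distortionG ψ i

theorem statement14 (N : ℕ) (hN : 1 ≤ N)
    (l r : ℕ → ℝ) (hlr : ∀ i ≤ N, l i ≤ r i)
    (ψ : ℕ → ℝ → ℝ)
    (hsmooth : ∀ i < N, ContDiff ℝ 2 (ψ i))
    (hpos : ∀ i < N, ∀ x ∈ Icc (l i) (r i), 0 < deriv (ψ i) x)
    (hmaps : ∀ i < N, ψ i '' Icc (l i) (r i) = Icc (l (i + 1)) (r (i + 1)))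
    -- `F k = ψ_k ∘ ⋯ ∘ ψ₀`
    (F : ℕ → ℝ → ℝ)
    (hF0 : F 0 = ψ 0)
    (hFs : ∀ k : ℕ, F (k + 1) = ψ (k + 1) ∘ F k) :
    ∀ K : ℝ,
      (∀ i < N, ∀ x ∈ Icc (l i) (r i),
        |deriv (deriv (ψ i)) x / deriv (ψ i) x| ≤ K) →
      ∀ x ∈ Icc (l 0) (r 0), ∀ y ∈ Icc (l 0) (r 0),
        Real.log (deriv (F (N - 1)) x / deriv (F (N - 1)) y) ≤
          K * ∑ k ∈ Finset.range N, (r k - l k) := by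
  intro K hK x hx y hy
  set G := distortionG ψ with hG
  -- F k = G (k+1)
  have hFG : ∀ k, F k = G (k + 1) := by
    intro k
    induction k with
    | zero => simp [hF0, hG, distortionG]
    | succ k ih => simp [hFs, ih, hG, distortionG]
  -- membership
  have hmem : ∀ i ≤ N, ∀ z ∈ Icc (l 0) (r 0), G i z ∈ Icc (l i) (r i) := by
    intro i
    induction i with
    | zero => intro _ z hz; simpa [hG, distortionG] using hz
    | succ i ih =>
      intro hi z hz
      have h1 : G i z ∈ Icc (l i) (r i) := ih (by omega) z hz
      have : ψ i (G i z) ∈ ψ i '' Icc (l i) (r i) := mem_image_of_mem _ h1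
      rw [hmaps i (by omega)] at this
      simpa [hG, distortionG] using this
  -- differentiability & derivative product formula
  have hdiff : ∀ i < N, Differentiable ℝ (ψ i) := fun i hi =>
    (hsmooth i hi).differentiable (by norm_num)
  have hder : ∀ k < N, Differentiable ℝ (G (k + 1)) ∧
      ∀ z, deriv (G (k + 1)) z = ∏ i ∈ Finset.range (k + 1), deriv (ψ i) (G i z) := by
    intro k
    induction k with
    | zero =>
      intro _
      have h1 : G 1 = ψ 0 := by funext z; simp [hG, distortionG]
      refine ⟨h1 ▸ hdiff 0 hN, fun z => by simp [h1, hG, distortionG]⟩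
    | succ k ih =>
      intro hk
      obtain ⟨hd, he⟩ := ih (by omega)
      have h1 : G (k + 2) = ψ (k + 1) ∘ G (k + 1) := by funext z; simp [hG, distortionG]
      constructor
      · rw [h1]; exact (hdiff (k + 1) hk).comp hd
      · intro z
        rw [h1, deriv_comp z ((hdiff (k + 1) hk).differentiableAt) (hd z),
          Finset.prod_range_succ, he z, mul_comm]
  obtain ⟨hFd, hFe⟩ := hder (N - 1) (by omega)
  have hN1 : N - 1 + 1 = N := by omega
  -- positivity of factors
  have hfacx : ∀ z ∈ Icc (l 0) (r 0), ∀ i ∈ Finset.range N, 0 < deriv (ψ i) (G i z) := by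
    intro z hz i hi
    rw [Finset.mem_range] at hi
    exact hpos i hi _ (hmem i (by omega) z hz)
  -- per-term bound
  have hterm : ∀ i < N, ∀ a ∈ Icc (l i) (r i), ∀ b ∈ Icc (l i) (r i),
      Real.log (deriv (ψ i) a) - Real.log (deriv (ψ i) b) ≤ K * (r i - l i) := by
    intro i hi a ha b hb
    have hK0 : 0 ≤ K := le_trans (abs_nonneg _)
      (hK 0 hN (l 0) ⟨le_rfl, hlr 0 (Nat.zero_le _)⟩)
    set g := deriv (ψ i) with hg
    have hg1 : ContDiff ℝ 1 g := by
      have h' : ContDiff ℝ ((1:ℕ) + 1) (ψ i) := by exact_mod_cast hsmooth i hi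
      exact (contDiff_succ_iff_deriv.mp h').2.2
    have hgd : Differentiable ℝ g := hg1.differentiable one_ne_zero
    have hder2 : ∀ t ∈ Icc (l i) (r i),
        HasDerivWithinAt (fun s => Real.log (g s)) (deriv g t / g t) (Icc (l i) (r i)) t := by
      intro t ht
      have hgt : g t ≠ 0 := ne_of_gt (hpos i hi t ht)
      have := (Real.hasDerivAt_log hgt).comp t (hgd t).hasDerivAt
      have h2 : (g t)⁻¹ * deriv g t = deriv g t / g t := by ring
      exact (h2 ▸ this).hasDerivWithinAt
    have hbound : ∀ t ∈ Icc (l i) (r i), ‖deriv g t / g t‖ ≤ K := by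
      intro t ht
      rw [Real.norm_eq_abs]; exact hK i hi t ht
    have hmvt := (convex_Icc (l i) (r i)).norm_image_sub_le_of_norm_hasDerivWithin_le
      hder2 hbound hb ha
    have h3 : Real.log (g a) - Real.log (g b) ≤ K * |a - b| := by
      calc Real.log (g a) - Real.log (g b) ≤ |Real.log (g a) - Real.log (g b)| := le_abs_self _
        _ ≤ K * |a - b| := by simpa [Real.norm_eq_abs] using hmvt
    have h4 : |a - b| ≤ r i - l i := by
      rw [abs_sub_le_iff]; constructor <;> linarith [ha.1, ha.2, hb.1, hb.2]
    calc Real.log (g a) - Real.log (g b) ≤ K * |a - b| := h3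
      _ ≤ K * (r i - l i) := mul_le_mul_of_nonneg_left h4 hK0
  -- assemble
  rw [hN1] at hFe
  rw [hFG, hN1, hFe x, hFe y]
  have hPx : ∀ i ∈ Finset.range N, deriv (ψ i) (G i x) ≠ 0 :=
    fun i hi => ne_of_gt (hfacx x hx i hi)
  have hPy : ∀ i ∈ Finset.range N, deriv (ψ i) (G i y) ≠ 0 :=
    fun i hi => ne_of_gt (hfacx y hy i hi)
  rw [Real.log_div (Finset.prod_ne_zero_iff.mpr hPx) (Finset.prod_ne_zero_iff.mpr hPy),
    Real.log_prod hPx, Real.log_prod hPy, ← Finset.sum_sub_distrib, Finset.mul_sum]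
  apply Finset.sum_le_sum
  intro i hi
  rw [Finset.mem_range] at hi
  exact hterm i hi _ (hmem i (by omega) x hx) _ (hmem i (by omega) y hy)
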